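/- Let 0 = j₀ < j₁ < … < j_I < j_{I+1} be real numbers and q₀, q₁, …, q_I ≥ 0 prices such that the piecewise linear function through the points (j₀, q₀), (j₁, q₁), …, (j_I, q_I), (j_{I+1}, 0) is nonincreasing and convex. Let g : [0, ∞) → ℝ be convex with g ≥ 0 = g(0), let 𝐠 = (g(j₁), …, g(j_{I+1}))ᵀ ∈ ℝ^{I+1}, and let D be the (I+1)×(I+1) lower triangular matrix with entries D[n, i] = (j_n − j_{i−1})⁺ for n = 1, …, I+1 and i = 1, …, I+1. Then D is invertible, the vector 𝐰 = D⁻¹𝐠 has all coordinates nonnegative, and 𝐰 solves the linear program: 𝐪ᵀ𝐰 = min{𝐪ᵀ𝐚 : 𝐚 ∈ ℝ^{I+1}, 𝐚 ≥ 0, D𝐚 ≥ 𝐠}, where 𝐪 = (q₀, …, q_I)ᵀ and the inequalities between vectors are coordinatewise. -/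
import Mathlib


open scoped Matrix

/-- Solution of the super-replication linear program for a convex payoff `g` using a
finite family of call prices lying on a nonincreasing convex piecewise linear curve.
Indices: `j 0 = 0 < j 1 < … < j (I+1)`, prices `q 0, …, q I ≥ 0`, `q (I+1) = 0`;
`D n i = (j (n+1) - j i)⁺` for `n, i : Fin (I+1)`; `𝐠 n = g (j (n+1))`;
`𝐪 i = q i`. -/
theorem stmt_13 (I : ℕ) (j : ℕ → ℝ) (q : ℕ → ℝ)
    (hj0 : j 0 = 0)
    (hjmono : ∀ n, n ≤ I → j n < j (n + 1))
    (hq : ∀ n, n ≤ I → 0 ≤ q n) (hqtop : q (I + 1) = 0)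
    -- the chord slopes of the piecewise linear price curve are nonpositive …
    (hslope_np : ∀ n, n ≤ I → (q (n + 1) - q n) / (j (n + 1) - j n) ≤ 0)
    -- … and nondecreasing (the curve is convex)
    (hslope_mono : ∀ n, n + 1 ≤ I →
      (q (n + 1) - q n) / (j (n + 1) - j n) ≤ (q (n + 2) - q (n + 1)) / (j (n + 2) - j (n + 1)))
    (g : ℝ → ℝ) (hgconv : ConvexOn ℝ (Set.Ici 0) g)
    (hgnn : ∀ x, 0 ≤ x → 0 ≤ g x) (hg0 : g 0 = 0)
    (D : Matrix (Fin (I + 1)) (Fin (I + 1)) ℝ)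
    (hD : ∀ n i : Fin (I + 1), D n i = max (j (n.val + 1) - j i.val) 0)
    (gvec : Fin (I + 1) → ℝ) (hgvec : ∀ n : Fin (I + 1), gvec n = g (j (n.val + 1)))
    (qvec : Fin (I + 1) → ℝ) (hqvec : ∀ i : Fin (I + 1), qvec i = q i.val)
    (w : Fin (I + 1) → ℝ) (hw : w = D⁻¹.mulVec gvec) :
    -- D is invertible
    IsUnit D ∧
    -- w = D⁻¹ 𝐠 is nonnegative
    (∀ i, 0 ≤ w i) ∧
    -- w is feasible for the linear program
    gvec ≤ D.mulVec w ∧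
    -- and w is optimal: it minimizes 𝐪ᵀ𝐚 over the feasible set
    (∀ a : Fin (I + 1) → ℝ, (∀ i, 0 ≤ a i) → gvec ≤ D.mulVec a →
      qvec ⬝ᵥ w ≤ qvec ⬝ᵥ a) := by
  classical
  -- monotonicity facts about `j`
  have hjlt : ∀ a b : ℕ, a < b → b ≤ I + 1 → j a < j b := by
    intro a b hab hb
    induction b with
    | zero => omega
    | succ b ih =>
      rcases Nat.lt_succ_iff_lt_or_eq.mp hab with h | h
      · exact lt_trans (ih h (by omega)) (hjmono b (by omega))
      · subst h; exact hjmono a (by omega)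
  have hjle : ∀ a b : ℕ, a ≤ b → b ≤ I + 1 → j a ≤ j b := by
    intro a b hab hb
    rcases lt_or_eq_of_le hab with h | h
    · exact (hjlt a b h hb).le
    · rw [h]
  have hjnn : ∀ b : ℕ, b ≤ I + 1 → 0 ≤ j b := by
    intro b hb; rw [← hj0]; exact hjle 0 b (Nat.zero_le b) hb
  have hden : ∀ n : ℕ, n ≤ I → 0 < j (n + 1) - j n := by
    intro n hn; have := hjmono n hn; linarith
  -- the explicit primal solution
  set G : ℕ → ℝ := fun n => g (j n) with hGdef
  have hG0 : G 0 = 0 := by simp [hGdef, hj0, hg0]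
  set s : ℕ → ℝ := fun n => (G (n + 1) - G n) / (j (n + 1) - j n) with hsdef
  have hs : ∀ n : ℕ, n ≤ I → s n * (j (n + 1) - j n) = G (n + 1) - G n := by
    intro n hn
    exact div_mul_cancel₀ _ (ne_of_gt (hden n hn))
  set f : ℕ → ℝ := fun m => if m = 0 then 0 else s (m - 1) with hfdef
  set ws : ℕ → ℝ := fun n => f (n + 1) - f n with hwsdef
  have hf0 : f 0 = 0 := by simp [hfdef]
  have hfs : ∀ m : ℕ, f (m + 1) = s m := by intro m; simp [hfdef]
  have hsum_ws : ∀ m : ℕ, ∑ i ∈ Finset.range (m + 1), ws i = s m := by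
    intro m
    rw [hwsdef, Finset.sum_range_sub f, hf0, hfs, sub_zero]
  have hws0 : ws 0 = s 0 := by rw [hwsdef]; simp [hfs, hf0]
  have hwsS : ∀ n : ℕ, ws (n + 1) = s (n + 1) - s n := by
    intro n; rw [hwsdef]; simp [hfs]
  have hws_nn : ∀ n : ℕ, n ≤ I → 0 ≤ ws n := by
    intro n hn
    cases n with
    | zero =>
      rw [hws0, hsdef]
      apply div_nonneg _ (hden 0 (Nat.zero_le I)).le
      simp only [hGdef, hG0]
      have : G 1 = g (j 1) := rfl
      simp only [hj0, hg0, sub_zero]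
      exact hgnn (j 1) (hjnn 1 (by omega))
    | succ n =>
      rw [hwsS, sub_nonneg, hsdef]
      exact hgconv.slope_mono_adjacent (hjnn n (by omega)) (hjnn (n + 2) (by omega))
        (hjmono n (by omega)) (hjmono (n + 1) (by omega))
  -- the row identity for the primal solution
  have hrowW : ∀ n : ℕ, n ≤ I →
      ∑ i ∈ Finset.range (n + 1), (j (n + 1) - j i) * ws i = G (n + 1) := by
    intro n hn
    induction n with
    | zero =>
      rw [Finset.sum_range_one, hws0, mul_comm, hs 0 (Nat.zero_le I), hG0, sub_zero]
    | succ n ih =>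
      have ih' := ih (by omega)
      have hsplit : ∀ i : ℕ, (j (n + 2) - j i) * ws i
          = (j (n + 1) - j i) * ws i + (j (n + 2) - j (n + 1)) * ws i := by
        intro i; ring
      calc ∑ i ∈ Finset.range (n + 2), (j (n + 2) - j i) * ws i
          = ∑ i ∈ Finset.range (n + 2),
              ((j (n + 1) - j i) * ws i + (j (n + 2) - j (n + 1)) * ws i) := by
            exact Finset.sum_congr rfl fun i _ => hsplit i
        _ = (∑ i ∈ Finset.range (n + 2), (j (n + 1) - j i) * ws i)
              + (j (n + 2) - j (n + 1)) * ∑ i ∈ Finset.range (n + 2), ws i := by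
            rw [Finset.sum_add_distrib, Finset.mul_sum]
        _ = G (n + 1) + (j (n + 2) - j (n + 1)) * s (n + 1) := by
            rw [Finset.sum_range_succ, ih', sub_self, zero_mul, add_zero, hsum_ws]
        _ = G (n + 2) := by
            have := hs (n + 1) hn
            linarith [this]
  -- D is lower triangular with positive diagonal
  have htri : D.BlockTriangular OrderDual.toDual := by
    intro n i hni
    have h : n < i := hni
    rw [hD]
    have hle : j (n.val + 1) ≤ j i.val := hjle (n.val + 1) i.val (by exact_mod_cast h) (by omega)
    exact max_eq_right (by linarith)
  have hdiag : ∀ n : Fin (I + 1), D n n = j (n.val + 1) - j n.val := by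
    intro n
    rw [hD]
    exact max_eq_left (hden n.val (by omega)).le
  have hdet : IsUnit D.det := by
    rw [Matrix.det_of_lowerTriangular D htri]
    apply isUnit_iff_ne_zero.mpr
    apply ne_of_gt
    apply Finset.prod_pos
    intro n _
    rw [hdiag]
    exact hden n.val (by omega)
  have hUnit : IsUnit D := (Matrix.isUnit_iff_isUnit_det D).mpr hdet
  -- D w = gvec
  have hDw : D.mulVec w = gvec := by
    rw [hw, Matrix.mulVec_mulVec, Matrix.mul_nonsing_inv D hdet, Matrix.one_mulVec]
  -- w equals the explicit solution
  set wsF : Fin (I + 1) → ℝ := fun i => ws i.val with hwsFdef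
  have hDws : D.mulVec wsF = gvec := by
    funext n
    show ∑ i : Fin (I + 1), D n i * wsF i = gvec n
    have h1 : ∀ i : Fin (I + 1), D n i * wsF i
        = max (j (n.val + 1) - j i.val) 0 * ws i.val := by
      intro i; rw [hD]
    calc ∑ i : Fin (I + 1), D n i * wsF i
        = ∑ i ∈ Finset.range (I + 1), max (j (n.val + 1) - j i) 0 * ws i := by
          rw [Finset.sum_congr rfl fun i _ => h1 i]
          exact Fin.sum_univ_eq_sum_range (fun i => max (j (n.val + 1) - j i) 0 * ws i) (I + 1)
      _ = ∑ i ∈ Finset.range (n.val + 1), max (j (n.val + 1) - j i) 0 * ws i := by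
          refine (Finset.sum_subset (Finset.range_subset_range.mpr (by omega)) ?_).symm
          intro i hi hni
          simp only [Finset.mem_range] at hi hni
          have : j (n.val + 1) ≤ j i := hjle (n.val + 1) i (by omega) (by omega)
          rw [max_eq_right (by linarith), zero_mul]
      _ = ∑ i ∈ Finset.range (n.val + 1), (j (n.val + 1) - j i) * ws i := by
          refine Finset.sum_congr rfl fun i hi => ?_
          simp only [Finset.mem_range] at hi
          have : j i < j (n.val + 1) := hjlt i (n.val + 1) (by omega) (by omega)
          rw [max_eq_left (by linarith)]
      _ = G (n.val + 1) := hrowW n.val (by omega)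
      _ = gvec n := (hgvec n).symm
  have hw_eq : w = wsF := by
    rw [hw, ← hDws, Matrix.mulVec_mulVec, Matrix.nonsing_inv_mul D hdet, Matrix.one_mulVec]
  -- the dual solution
  set t : ℕ → ℝ := fun n => (q (n + 1) - q n) / (j (n + 1) - j n) with htdef
  have ht : ∀ n : ℕ, n ≤ I → t n * (j (n + 1) - j n) = q (n + 1) - q n := by
    intro n hn
    exact div_mul_cancel₀ _ (ne_of_gt (hden n hn))
  set t' : ℕ → ℝ := fun m => if m ≤ I then t m else 0 with ht'def
  set ys : ℕ → ℝ := fun n => t' (n + 1) - t' n with hysdef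
  have hys_nn : ∀ n : ℕ, n ≤ I → 0 ≤ ys n := by
    intro n hn
    show 0 ≤ (if n + 1 ≤ I then t (n + 1) else 0) - (if n ≤ I then t n else 0)
    rw [if_pos hn]
    by_cases h : n + 1 ≤ I
    · rw [if_pos h, sub_nonneg]
      exact hslope_mono n h
    · rw [if_neg h]
      have h2 : t n ≤ 0 := hslope_np n hn
      linarith
  have hsum_ys : ∀ a b : ℕ, a ≤ b → ∑ n ∈ Finset.Ico a b, ys n = t' b - t' a := by
    intro a b hab
    rw [Finset.sum_Ico_eq_sub _ hab, hysdef, Finset.sum_range_sub t', Finset.sum_range_sub t']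
    ring
  -- the row identity for the dual solution (downward induction)
  have hrowY : ∀ d i : ℕ, i + d = I →
      ∑ n ∈ Finset.Ico i (I + 1), (j (n + 1) - j i) * ys n = q i := by
    intro d
    induction d with
    | zero =>
      intro i hi
      have hii : i = I := by omega
      rw [hii]
      rw [Nat.Ico_succ_singleton, Finset.sum_singleton]
      have hysI : ys I = -t I := by
        show (if I + 1 ≤ I then t (I + 1) else 0) - (if I ≤ I then t I else 0) = -t I
        rw [if_neg (by omega), if_pos le_rfl]
        ring
      rw [hysI]
      have h1 := ht I le_rfl
      rw [hqtop] at h1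
      linarith [h1]
    | succ d ih =>
      intro i hi
      have ih' := ih (i + 1) (by omega)
      rw [Finset.sum_eq_sum_Ico_succ_bot (by omega : i < I + 1)]
      have hsplit : ∑ n ∈ Finset.Ico (i + 1) (I + 1), (j (n + 1) - j i) * ys n
          = (∑ n ∈ Finset.Ico (i + 1) (I + 1), (j (n + 1) - j (i + 1)) * ys n)
            + (j (i + 1) - j i) * ∑ n ∈ Finset.Ico (i + 1) (I + 1), ys n := by
        rw [Finset.mul_sum, ← Finset.sum_add_distrib]
        exact Finset.sum_congr rfl fun n _ => by ring
      rw [hsplit, ih', hsum_ys (i + 1) (I + 1) (by omega)]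
      have hysi : ys i = t (i + 1) - t i := by
        show (if i + 1 ≤ I then t (i + 1) else 0) - (if i ≤ I then t i else 0)
            = t (i + 1) - t i
        rw [if_pos (by omega : i + 1 ≤ I), if_pos (by omega : i ≤ I)]
      have ht'1 : t' (I + 1) = 0 := by
        show (if I + 1 ≤ I then t (I + 1) else 0) = 0
        rw [if_neg (by omega)]
      have ht'2 : t' (i + 1) = t (i + 1) := by
        show (if i + 1 ≤ I then t (i + 1) else 0) = t (i + 1)
        rw [if_pos (by omega : i + 1 ≤ I)]
      rw [hysi, ht'1, ht'2]
      have h1 := ht i (by omega)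
      linear_combination -h1
  set ysF : Fin (I + 1) → ℝ := fun n => ys n.val with hysFdef
  have hqrow : ∀ i : Fin (I + 1), ∑ n : Fin (I + 1), D n i * ysF n = qvec i := by
    intro i
    have h1 : ∀ n : Fin (I + 1), D n i * ysF n
        = max (j (n.val + 1) - j i.val) 0 * ys n.val := by
      intro n; rw [hD]
    calc ∑ n : Fin (I + 1), D n i * ysF n
        = ∑ n ∈ Finset.range (I + 1), max (j (n + 1) - j i.val) 0 * ys n := by
          rw [Finset.sum_congr rfl fun n _ => h1 n]
          exact Fin.sum_univ_eq_sum_range (fun n => max (j (n + 1) - j i.val) 0 * ys n) (I + 1)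
      _ = ∑ n ∈ Finset.Ico i.val (I + 1), max (j (n + 1) - j i.val) 0 * ys n := by
          rw [Finset.range_eq_Ico]
          refine (Finset.sum_subset ?_ ?_).symm
          · exact Finset.Ico_subset_Ico (Nat.zero_le _) le_rfl
          · intro n hn hni
            simp only [Finset.mem_Ico] at hn hni
            have hni' : n < i.val := by omega
            have : j (n + 1) ≤ j i.val := hjle (n + 1) i.val (by omega) (by omega)
            rw [max_eq_right (by linarith), zero_mul]
      _ = ∑ n ∈ Finset.Ico i.val (I + 1), (j (n + 1) - j i.val) * ys n := by
          refine Finset.sum_congr rfl fun n hn => ?_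
          simp only [Finset.mem_Ico] at hn
          have : j i.val ≤ j (n + 1) := hjle i.val (n + 1) (by omega) (by omega)
          rw [max_eq_left (by linarith)]
      _ = q i.val := hrowY (I - i.val) i.val (by omega)
      _ = qvec i := (hqvec i).symm
  -- the key duality identity
  have hdual : ∀ a : Fin (I + 1) → ℝ, qvec ⬝ᵥ a = ysF ⬝ᵥ D.mulVec a := by
    intro a
    show ∑ i, qvec i * a i = ∑ n, ysF n * ∑ i, D n i * a i
    calc ∑ i, qvec i * a i
        = ∑ i, (∑ n, D n i * ysF n) * a i := by
          exact Finset.sum_congr rfl fun i _ => by rw [hqrow i]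
      _ = ∑ i, ∑ n, D n i * ysF n * a i := by
          exact Finset.sum_congr rfl fun i _ => Finset.sum_mul _ _ _
      _ = ∑ n, ∑ i, D n i * ysF n * a i := Finset.sum_comm
      _ = ∑ n, ysF n * ∑ i, D n i * a i := by
          refine Finset.sum_congr rfl fun n _ => ?_
          rw [Finset.mul_sum]
          exact Finset.sum_congr rfl fun i _ => by ring
  refine ⟨hUnit, ?_, ?_, ?_⟩
  · intro i
    rw [hw_eq]
    exact hws_nn i.val (by omega)
  · rw [hDw]
  · intro a ha hfeas
    rw [hdual w, hdual a, hDw]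
    apply Finset.sum_le_sum
    intro n _
    exact mul_le_mul_of_nonneg_left (hfeas n) (hys_nn n.val (by omega))
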